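/- Let T be a finite tree with bipartition (A, B) such that every vertex of A has degree at least 2. Then the minimum vertex cover of T has size exactly |A|. -/

import Mathlib

open SimpleGraph


def IsVertexCover {V : Type*} (G : SimpleGraph V) (C : Finset V) : Prop :=
  ∀ e ∈ G.edgeSet, ∃ v ∈ C, v ∈ e

theorem tree_cover_number {V : Type*} [Fintype V] [DecidableEq V] (G : SimpleGraph V)
    [DecidableRel G.Adj] (A B : Finset V)
    (hT : G.IsTree)
    (hpart : ∀ v : V, v ∈ A ↔ v ∉ B)
    (hA : ∀ u ∈ A, ∀ v ∈ A, ¬ G.Adj u v)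
    (hB : ∀ u ∈ B, ∀ v ∈ B, ¬ G.Adj u v)
    (hdeg : ∀ v ∈ A, 2 ≤ G.degree v) :
    (∃ C : Finset V, _root_.IsVertexCover G C ∧ C.card = A.card) ∧
      ∀ C : Finset V, _root_.IsVertexCover G C → A.card ≤ C.card := by
  classical
  -- every edge has an endpoint in A
  have hedgeA : ∀ {u v : V}, G.Adj u v → u ∈ A ∨ v ∈ A := by
    intro u v huv
    by_cases hu : u ∈ A
    · exact Or.inl hu
    by_cases hv : v ∈ A
    · exact Or.inr hv
    · exact absurd huv (hB u (by simpa [hpart u] using hu) v (by simpa [hpart v] using hv))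
  have hAcover : _root_.IsVertexCover G A := by
    intro e he
    induction e with
    | _ u v =>
      rcases hedgeA he with h | h
      · exact ⟨u, h, Sym2.mem_mk_left u v⟩
      · exact ⟨v, h, Sym2.mem_mk_right u v⟩
  refine ⟨⟨A, hAcover, rfl⟩, ?_⟩
  -- root the tree
  obtain ⟨r⟩ := hT.isConnected.nonempty
  choose p hp hup using hT.existsUnique_path
  set par : V → V := fun v => (p v r).getVert 1 with hpar
  -- the key claim: a "child" of `a` has parent `a`
  have key : ∀ a b : V, G.Adj a b → (a = r ∨ b ≠ par a) → par b = a := by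
    intro a b hab hor
    have hbsup : b ∉ (p a r).support := by
      intro hbs
      rcases hor with rfl | hne
      · have hnil : (Walk.nil : G.Walk a a) = p a a := hup a a Walk.nil Walk.IsPath.nil
        rw [← hnil] at hbs
        simp only [Walk.support_nil, List.mem_singleton] at hbs
        subst hbs
        exact G.irrefl hab
      · apply hne
        have hspec := (p a r).take_spec hbs
        have htp : ((p a r).takeUntil b hbs).IsPath := (hp a r).takeUntil hbs
        have hcp : (Walk.cons hab Walk.nil).IsPath := by
          simp [Walk.cons_isPath_iff, hab.ne]
        have heq : (p a r).takeUntil b hbs = Walk.cons hab Walk.nil := by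
          rw [hup a b _ htp, hup a b _ hcp]
        show b = (p a r).getVert 1
        conv_rhs => rw [← hspec, heq]
        simp [Walk.cons_append, Walk.getVert_cons_succ]
    have hq : (Walk.cons (G.adj_symm hab) (p a r)).IsPath :=
      (Walk.cons_isPath_iff _ _).2 ⟨hp a r, hbsup⟩
    have h2 := hup b r _ hq
    show (p b r).getVert 1 = a
    rw [← h2]
    simp [Walk.getVert_cons_succ]
  -- choose a child for each vertex of A
  have hchild : ∀ a : V, ∃ b : V, a ∈ A → G.Adj a b ∧ par b = a := by
    intro a
    by_cases ha : a ∈ A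
    · by_cases har : a = r
      · obtain ⟨b, hb⟩ := Finset.card_pos.mp (by
          rw [G.card_neighborFinset_eq_degree]
          exact lt_of_lt_of_le two_pos (hdeg a ha))
        refine ⟨b, fun _ => ⟨(G.mem_neighborFinset a b).1 hb, key a b ((G.mem_neighborFinset a b).1 hb) (Or.inl har)⟩⟩
      · have h2 : 1 < (G.neighborFinset a).card := by
          rw [G.card_neighborFinset_eq_degree]
          have := hdeg a ha; omega
        obtain ⟨b, hb, hbne⟩ := Finset.exists_mem_ne h2 (par a)
        refine ⟨b, fun _ => ⟨(G.mem_neighborFinset a b).1 hb, key a b ((G.mem_neighborFinset a b).1 hb) (Or.inr hbne)⟩⟩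
    · exact ⟨a, fun h => absurd h ha⟩
  choose g hg using hchild
  have hgadj : ∀ a ∈ A, G.Adj a (g a) := fun a ha => (hg a ha).1
  have hginj : ∀ a ∈ A, ∀ a' ∈ A, g a = g a' → a = a' := by
    intro a ha a' ha' h
    have := (hg a ha).2
    rw [h, (hg a' ha').2] at this
    exact this.symm
  -- lower bound
  intro C hC
  have hmap : ∀ a ∈ A, (if a ∈ C then a else g a) ∈ C := by
    intro a ha
    by_cases hac : a ∈ C
    · simp [hac]
    · simp only [hac, if_false]
      obtain ⟨v, hvC, hve⟩ := hC s(a, g a) (hgadj a ha)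
      rcases Sym2.mem_iff.mp hve with rfl | rfl
      · exact absurd hvC hac
      · exact hvC
  refine Finset.card_le_card_of_injOn (fun a => if a ∈ C then a else g a) hmap ?_
  intro a ha a' ha' h
  simp only [Finset.mem_coe] at ha ha'
  by_cases hac : a ∈ C <;> by_cases hac' : a' ∈ C <;> simp only [hac, hac', if_true, if_false] at h
  · exact h
  · have hadj : G.Adj a' a := by rw [h]; exact hgadj a' ha'
    exact ((hA a' ha' a ha) hadj).elim
  · have hadj : G.Adj a a' := by rw [← h]; exact hgadj a ha
    exact ((hA a ha a' ha') hadj).elim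
  · exact hginj a ha a' ha' h
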